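/- Let A be a nonnegative bounded linear operator on L²(X) with A^r = A (r ≥ 2), whose kernel contains no nonzero nonnegative function, and whose range is finite-dimensional with real basis functions. Then the range of A admits a basis consisting of nonnegative functions. -/

import Mathlib

open MeasureTheory

theorem stmt7 {X : Type*} [MeasurableSpace X] (μ : Measure X) [IsFiniteMeasure μ]
    (A : Lp ℝ 2 μ →L[ℝ] Lp ℝ 2 μ)
    (hpos : ∀ f : Lp ℝ 2 μ, 0 ≤ f → 0 ≤ A f)
    (r : ℕ) (hr : 2 ≤ r) (hpot : A ^ r = A)
    (hker : ∀ h : Lp ℝ 2 μ, A h = 0 → 0 ≤ h → h = 0)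
    (hfin : FiniteDimensional ℝ (LinearMap.range (A : Lp ℝ 2 μ →ₗ[ℝ] Lp ℝ 2 μ))) :
    ∃ (N : ℕ) (b : Module.Basis (Fin N) ℝ (LinearMap.range (A : Lp ℝ 2 μ →ₗ[ℝ] Lp ℝ 2 μ))),
      ∀ j, 0 ≤ (b j : Lp ℝ 2 μ) := by
  set V := LinearMap.range (A : Lp ℝ 2 μ →ₗ[ℝ] Lp ℝ 2 μ) with hV
  have hpowpos : ∀ n : ℕ, ∀ f : Lp ℝ 2 μ, 0 ≤ f → 0 ≤ (A ^ (n+1)) f := by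
    intro n
    induction n with
    | zero => simpa using hpos
    | succ k ih =>
      intro f hf
      have h1 : (A ^ (k+1+1)) f = A ((A ^ (k+1)) f) := by
        rw [pow_succ']; rfl
      rw [h1]
      exact hpos _ (ih f hf)
  obtain ⟨k, rfl⟩ : ∃ k, r = k + 2 := ⟨r - 2, by omega⟩
  set P := A ^ (k+1) with hP
  have hPpos : ∀ f, 0 ≤ f → 0 ≤ P f := hpowpos k
  have hPmono : ∀ f g : Lp ℝ 2 μ, f ≤ g → P f ≤ P g := by
    intro f g h
    have := hPpos (g - f) (by simpa [sub_nonneg] using h)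
    simpa [map_sub, sub_nonneg] using this
  have hAP : ∀ f, A (P f) = A f := by
    intro f
    have : A * P = A := by rw [hP, ← pow_succ']; exact hpot
    calc A (P f) = (A * P) f := rfl
      _ = A f := by rw [this]
  have hPA : ∀ f, P (A f) = A f := by
    intro f
    have : P * A = A := by rw [hP, ← pow_succ]; exact hpot
    calc P (A f) = (P * A) f := rfl
      _ = A f := by rw [this]
  have hPfix : ∀ f ∈ V, P f = f := by
    rintro f ⟨g, rfl⟩
    simpa using hPA g
  have hPrange : ∀ f, P f ∈ V := by
    intro f
    have h1 : P f = A ((A ^ k) f) := by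
      have : A * A ^ k = P := by rw [hP, ← pow_succ']
      rw [← this]; rfl
    rw [h1]
    exact ⟨(A ^ k) f, rfl⟩
  have habs : ∀ f ∈ V, |f| ∈ V := by
    intro f hf
    have h1 : f ≤ P |f| := by
      have := hPmono f |f| (le_abs_self f)
      rwa [hPfix f hf] at this
    have h2 : -f ≤ P |f| := by
      have := hPmono (-f) |f| (neg_le_abs f)
      rwa [map_neg, hPfix f hf] at this
    have h3 : |f| ≤ P |f| := abs_le'.mpr ⟨h1, h2⟩
    have h4 : A (P |f| - |f|) = 0 := by
      rw [map_sub, hAP]; simp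
    have h5 : P |f| - |f| = 0 := hker _ h4 (sub_nonneg.mpr h3)
    have h6 : |f| = P |f| := by
      have := sub_eq_zero.mp h5; exact this.symm
    rw [h6]; exact hPrange _
  -- nonnegative elements of V span V
  set s : Set V := {v : V | 0 ≤ (v : Lp ℝ 2 μ)} with hs
  have hspan : ⊤ ≤ Submodule.span ℝ s := by
    intro v _
    set f : Lp ℝ 2 μ := (v : Lp ℝ 2 μ) with hf
    have hfV : f ∈ V := v.2
    set w : V := ⟨|f|, habs f hfV⟩ with hw
    have hvw : v + w ∈ s := by
      have : (0 : Lp ℝ 2 μ) ≤ f - (-|f|) := sub_nonneg.mpr (neg_le.mp (neg_le_abs f))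
      simpa [hs, sub_neg_eq_add] using this
    have hwv : w - v ∈ s := by
      have : (0 : Lp ℝ 2 μ) ≤ |f| - f := sub_nonneg.mpr (le_abs_self f)
      exact this
    have hveq : v = (2⁻¹ : ℝ) • (v + w) - (2⁻¹ : ℝ) • (w - v) := by
      module
    rw [hveq]
    exact Submodule.sub_mem _
      (Submodule.smul_mem _ _ (Submodule.subset_span hvw))
      (Submodule.smul_mem _ _ (Submodule.subset_span hwv))
  obtain ⟨t, hts, hspan_t, hli⟩ := exists_linearIndependent ℝ s
  have hspan_top : ⊤ ≤ Submodule.span ℝ (Set.range ((↑) : t → V)) := by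
    rw [Subtype.range_coe]
    rw [hspan_t]
    exact hspan
  haveI : FiniteDimensional ℝ V := hfin
  have htfin : t.Finite := hli.setFinite
  haveI := htfin.fintype
  refine ⟨Fintype.card t, (Module.Basis.mk hli hspan_top).reindex (Fintype.equivFin t), ?_⟩
  intro j
  rw [Module.Basis.reindex_apply, Module.Basis.mk_apply]
  exact hts ((Fintype.equivFin t).symm j).2
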